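/- arXiv:1810.08204 — 2 statements merged into one kernel-verified Lean document; each statement's English description precedes it below -/
import Mathlib

section
/- Zero-flux reduction of the double-semion phases: if a local configuration n ∈ {0,1}^12 satisfies the vertex-free (zero-flux) conditions — each of the six sums n₆+n₁+n₁₂, n₁+n₂+n₇, n₂+n₃+n₈, n₃+n₄+n₉, n₄+n₅+n₁₀, n₅+n₆+n₁₁ is even — then E(n) = 0, and hence b(n) = (−1)^{Σ_{j=1}^{6} n_{j−1}(1−n_j)}; i.e. on the vertex-free subspace the generalized plaquette phase of Eq. (12) reduces to 1 and the plaquette operator recovers the on-shell form of Eq. (6). -/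
/-- The integer occupation number of edge `j` (edges are numbered `1, …, 12` in the paper;
here `j : Fin 12` denotes edge `j+1`). -/
def occ (n : Fin 12 → ZMod 2) (j : Fin 12) : ℤ := ((n j).val : ℤ)

/-- The integer exponent `E(n)` of Eqs. (10)–(12): interior edges `1,…,6` are indices
`0,…,5`, outer legs `7,…,12` are indices `6,…,11`. -/
def Eexp (n : Fin 12 → ZMod 2) : ℤ :=
  occ n 11 * (occ n 0 * occ n 5 - (1 - occ n 0) * (1 - occ n 5)) +
  occ n 6 * ((1 - occ n 0) * (1 - occ n 1) - occ n 0 * occ n 1) +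
  (1 - occ n 7) * (occ n 1 * (1 - occ n 2) - (1 - occ n 1) * occ n 2) +
  occ n 8 * (occ n 2 * occ n 3 - (1 - occ n 2) * (1 - occ n 3)) +
  occ n 9 * ((1 - occ n 3) * (1 - occ n 4) - occ n 3 * occ n 4) +
  (1 - occ n 10) * (occ n 4 * (1 - occ n 5) - (1 - occ n 4) * occ n 5)

/-- The exponent `Σ_{j=1}^{6} n_{j−1}(1−n_j)` (with `n₀ := n₆`) of the `(−1)` factor. -/
def signExp (n : Fin 12 → ZMod 2) : ℤ :=
  occ n 5 * (1 - occ n 0) + occ n 0 * (1 - occ n 1) + occ n 1 * (1 - occ n 2) +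
  occ n 2 * (1 - occ n 3) + occ n 3 * (1 - occ n 4) + occ n 4 * (1 - occ n 5)

/-- The generalized plaquette phase `b(n) = (−1)^{Σ n_{j−1}(1−n_j)} · i^{E(n)}`. -/
noncomputable def plaqPhase (n : Fin 12 → ZMod 2) : ℂ :=
  (-1 : ℂ) ^ (signExp n) * Complex.I ^ (Eexp n)

/-- `n̄`: flip the six interior entries, leave the outer legs unchanged. -/
def flipInterior (n : Fin 12 → ZMod 2) : Fin 12 → ZMod 2 :=
  fun j => if (j : ℕ) < 6 then n j + 1 else n j

/-- The generalized plaquette operator `(B_p ψ)(n) = b(n̄) · ψ(n̄)`. -/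
noncomputable def plaqOp :
    EuclideanSpace ℂ (Fin 12 → ZMod 2) →ₗ[ℂ] EuclideanSpace ℂ (Fin 12 → ZMod 2) where
  toFun ψ := WithLp.toLp 2 (fun n => plaqPhase (flipInterior n) * ψ (flipInterior n))
  map_add' ψ φ := by
    ext c
    simp [mul_add]
  map_smul' a ψ := by
    ext c
    simp [mul_comm, mul_left_comm, mul_assoc]

lemma occ01 (n : Fin 12 → ZMod 2) (j : Fin 12) : occ n j = 0 ∨ occ n j = 1 := by
  unfold occ
  rcases (ZMod.val_lt (n j)) with h
  interval_cases h' : (n j).val <;> simp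

lemma term1 {a b c : ℤ} (ha : a = 0 ∨ a = 1) (hb : b = 0 ∨ b = 1) (hc : c = 0 ∨ c = 1)
    (h : Even (a + b + c)) : c * (a * b - (1 - a) * (1 - b)) = 0 := by
  rcases h with ⟨k, hk⟩
  rcases ha with rfl | rfl <;> rcases hb with rfl | rfl <;> rcases hc with rfl | rfl <;> omega

lemma term2 {a b c : ℤ} (ha : a = 0 ∨ a = 1) (hb : b = 0 ∨ b = 1) (hc : c = 0 ∨ c = 1)
    (h : Even (a + b + c)) : (1 - c) * (a * (1 - b) - (1 - a) * b) = 0 := by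
  rcases h with ⟨k, hk⟩
  rcases ha with rfl | rfl <;> rcases hb with rfl | rfl <;> rcases hc with rfl | rfl <;> omega

/-- Zero-flux reduction of the double-semion phases: on a vertex-free (zero-flux)
configuration — each of the six vertex sums is even — the exponent `E(n)` vanishes and the
generalized plaquette phase reduces to the on-shell form `(−1)^{Σ n_{j−1}(1−n_j)}`. -/
theorem zero_flux_reduction (n : Fin 12 → ZMod 2)
    (h1 : Even (occ n 5 + occ n 0 + occ n 11))
    (h2 : Even (occ n 0 + occ n 1 + occ n 6))
    (h3 : Even (occ n 1 + occ n 2 + occ n 7))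
    (h4 : Even (occ n 2 + occ n 3 + occ n 8))
    (h5 : Even (occ n 3 + occ n 4 + occ n 9))
    (h6 : Even (occ n 4 + occ n 5 + occ n 10)) :
    Eexp n = 0 ∧ plaqPhase n = (-1 : ℂ) ^ (signExp n) := by
  have hE : Eexp n = 0 := by
    unfold Eexp
    have t1 := term1 (occ01 n 0) (occ01 n 5) (occ01 n 11) (by rwa [add_comm (occ n 5) (occ n 0)] at h1)
    have t2 : occ n 6 * ((1 - occ n 0) * (1 - occ n 1) - occ n 0 * occ n 1) = 0 := by
      have := term1 (occ01 n 0) (occ01 n 1) (occ01 n 6) h2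
      rcases occ01 n 6 with h | h <;> rcases occ01 n 0 with h0 | h0 <;>
        rcases occ01 n 1 with h' | h' <;> rw [h, h0, h'] at this ⊢ <;> ring_nf at this ⊢ <;> omega
    have t3 := term2 (occ01 n 1) (occ01 n 2) (occ01 n 7) h3
    have t4 := term1 (occ01 n 2) (occ01 n 3) (occ01 n 8) h4
    have t5 : occ n 9 * ((1 - occ n 3) * (1 - occ n 4) - occ n 3 * occ n 4) = 0 := by
      have := term1 (occ01 n 3) (occ01 n 4) (occ01 n 9) h5
      rcases occ01 n 9 with h | h <;> rcases occ01 n 3 with h0 | h0 <;>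
        rcases occ01 n 4 with h' | h' <;> rw [h, h0, h'] at this ⊢ <;> ring_nf at this ⊢ <;> omega
    have t6 := term2 (occ01 n 4) (occ01 n 5) (occ01 n 10) h6
    rw [mul_comm (occ n 0) (occ n 5)] at t1
    linarith [t1, t2, t3, t4, t5, t6]
  refine ⟨hE, ?_⟩
  unfold plaqPhase
  rw [hE, zpow_zero, mul_one]
end

section
/- Vertex operators commute with the generalized plaquette operator (last relation of Eq. (16), local form): for each of the six vertex triples (a, b, c) ∈ {(6,1,12), (1,2,7), (2,3,8), (3,4,9), (4,5,10), (5,6,11)}, the diagonal vertex operator Q on the space of functions ({0,1}^12 → ℂ) defined by (Q ψ)(n) = (−1)^{n_a + n_b + n_c} · ψ(n) commutes with the generalized plaquette operator B_p defined by (B_p ψ)(n) = b(n̄) · ψ(n̄), i.e. Q ∘ B_p = B_p ∘ Q. -/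
/-- The diagonal vertex operator `(Q ψ)(n) = (−1)^{n_a + n_b + n_c} ψ(n)` associated to a
vertex whose three edges are `a`, `b`, `c`. -/
noncomputable def vertexOp (a b c : Fin 12) :
    EuclideanSpace ℂ (Fin 12 → ZMod 2) →ₗ[ℂ] EuclideanSpace ℂ (Fin 12 → ZMod 2) where
  toFun ψ := WithLp.toLp 2 (fun n => (-1 : ℂ) ^ ((n a).val + (n b).val + (n c).val) * ψ n)
  map_add' ψ φ := by
    ext c
    simp [mul_add]
  map_smul' r ψ := by
    ext c
    simp [mul_comm, mul_left_comm, mul_assoc]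

lemma flip_parity (x y : ZMod 2) (k : ℕ) :
    (-1 : ℂ) ^ ((x + 1).val + (y + 1).val + k) = (-1 : ℂ) ^ (x.val + y.val + k) := by
  fin_cases x <;> fin_cases y <;>
    simp [show ((1 + 1 : ZMod 2)).val = 0 from rfl, show ((0 + 1 : ZMod 2)).val = 1 from rfl, ZMod.val_one, pow_add, pow_mul]
      <;> (rw [← pow_add, ← pow_add, neg_one_pow_eq_pow_mod_two (R := ℂ), neg_one_pow_eq_pow_mod_two (R := ℂ) (n := _ + _)]; congr 1)

lemma key (a b c : Fin 12) (ha : (a : ℕ) < 6) (hb : (b : ℕ) < 6) (hc : ¬ (c : ℕ) < 6) :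
    vertexOp a b c ∘ₗ plaqOp = plaqOp ∘ₗ vertexOp a b c := by
  apply LinearMap.ext
  intro ψ
  ext n
  simp only [LinearMap.coe_comp, Function.comp_apply, vertexOp, plaqOp, LinearMap.coe_mk,
    AddHom.coe_mk, PiLp.toLp_apply]
  show (-1 : ℂ) ^ ((n a).val + (n b).val + (n c).val) *
      (plaqPhase (flipInterior n) * ψ (flipInterior n)) =
    plaqPhase (flipInterior n) *
      ((-1 : ℂ) ^ ((flipInterior n a).val + (flipInterior n b).val + (flipInterior n c).val) *
        ψ (flipInterior n))
  have h : (-1 : ℂ) ^ ((flipInterior n a).val + (flipInterior n b).val + (flipInterior n c).val)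
      = (-1 : ℂ) ^ ((n a).val + (n b).val + (n c).val) := by
    simp only [flipInterior, ha, hb, hc, if_true, if_false]
    exact flip_parity _ _ _
  rw [h]; ring

/-- Vertex operators commute with the generalized plaquette operator (last relation of
Eq. (16), local form): for each of the six vertex triples `(6,1,12)`, `(1,2,7)`, `(2,3,8)`,
`(3,4,9)`, `(4,5,10)`, `(5,6,11)` (here written 0-based), the diagonal vertex operator
commutes with `B_p`. -/
theorem vertexOp_commutes_plaqOp :
    ∀ t ∈ ([(5, 0, 11), (0, 1, 6), (1, 2, 7), (2, 3, 8), (3, 4, 9), (4, 5, 10)] :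
        List (Fin 12 × Fin 12 × Fin 12)),
      vertexOp t.1 t.2.1 t.2.2 ∘ₗ plaqOp = plaqOp ∘ₗ vertexOp t.1 t.2.1 t.2.2 := by
  intro t ht
  fin_cases ht <;> exact key _ _ _ (by decide) (by decide) (by decide)
end
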